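/- For each positive integer n, the sum ∑_{d≥1} r_d(2n)/d^2 · (log n + 2γ − 2 log d)^2 converges absolutely and equals ∑_{i+j≤2} c_{i,j} (log n)^i σ_{-1}^{(j)}(2n) for constants c_{i,j} independent of n, with c_{2,0} = 1/ζ(2). -/

import Mathlib

/-- The Ramanujan sum `r_d(n) = ∑_{b mod d, gcd(b,d)=1} e(bn/d)`. -/
noncomputable def ramanujanSum (d n : ℕ) : ℂ :=
  ∑ b ∈ (Finset.range d).filter (fun b => Nat.gcd b d = 1),
    Complex.exp (2 * Real.pi * Complex.I * b * n / d)


open Complex Finset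

lemma sum_exp_full (d m : ℕ) (hd : 0 < d) :
    ∑ b ∈ Finset.range d, Complex.exp (2 * Real.pi * Complex.I * b * m / d) =
      if d ∣ m then (d : ℂ) else 0 := by
  have hd0 : (d : ℂ) ≠ 0 := Nat.cast_ne_zero.mpr hd.ne'
  set z : ℂ := 2 * Real.pi * Complex.I * m / d with hz
  have hterm : ∀ b : ℕ, Complex.exp (2 * Real.pi * Complex.I * b * m / d)
      = Complex.exp z ^ b := by
    intro b
    rw [← Complex.exp_nat_mul]
    congr 1
    rw [hz]
    ring
  simp_rw [hterm]
  by_cases h : d ∣ m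
  · obtain ⟨c, rfl⟩ := h
    have : z = (c : ℤ) * (2 * Real.pi * Complex.I) := by
      rw [hz, div_eq_iff hd0]; push_cast; ring
    rw [this, Complex.exp_int_mul_two_pi_mul_I]
    simp [if_pos (Dvd.intro c rfl)]
  · rw [if_neg h]
    have hz1 : Complex.exp z ≠ 1 := by
      intro hone
      obtain ⟨k, hk⟩ := Complex.exp_eq_one_iff.mp hone
      apply h
      have h2 : (2 * Real.pi * Complex.I) ≠ 0 := by
        simp [Real.pi_ne_zero, Complex.I_ne_zero, Complex.ofReal_ne_zero]
      have : (m : ℂ) = k * d := by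
        have := hk
        rw [hz, div_eq_iff hd0] at this
        -- this : 2 * π * I * m = k * (2 * π * I) * d  (roughly)
        have h3 : (2 * Real.pi * Complex.I) * m = (2 * Real.pi * Complex.I) * (k * d) := by
          linear_combination this
        exact mul_left_cancel₀ h2 h3
      have hre : (m : ℝ) = (k : ℝ) * d := by exact_mod_cast this
      have hk0 : 0 ≤ k := by
        by_contra hneg
        push_neg at hneg
        have hk' : (k : ℝ) < 0 := by exact_mod_cast hneg
        have hd' : (0:ℝ) < d := by exact_mod_cast hd
        nlinarith [Nat.cast_nonneg (α := ℝ) m]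
      lift k to ℕ using hk0 with k'
      refine ⟨k', ?_⟩
      have : (m : ℂ) = (d : ℂ) * k' := by push_cast at this ⊢; linear_combination this
      exact_mod_cast this
    have hzd : Complex.exp z ^ d = 1 := by
      rw [← Complex.exp_nat_mul]
      have : (d : ℂ) * z = (m : ℤ) * (2 * Real.pi * Complex.I) := by
        rw [hz, mul_div_assoc', mul_div_cancel_left₀ _ hd0]; push_cast; ring
      rw [this, Complex.exp_int_mul_two_pi_mul_I]
    rw [geom_sum_eq hz1, hzd, sub_self, zero_div]

open ArithmeticFunction in
lemma sum_moeb (n : ℕ) :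
    ∑ t ∈ n.divisors, (ArithmeticFunction.moebius t : ℤ) = if n = 1 then 1 else 0 := by
  rw [← ArithmeticFunction.coe_mul_zeta_apply, ArithmeticFunction.moebius_mul_coe_zeta,
    ArithmeticFunction.one_apply]

lemma divisors_gcd' (a b : ℕ) (ha : a ≠ 0) :
    (Nat.gcd a b).divisors = a.divisors.filter (· ∣ b) := by
  ext t
  simp only [Nat.mem_divisors, Finset.mem_filter, Nat.dvd_gcd_iff]
  constructor
  · rintro ⟨⟨h1, h2⟩, -⟩; exact ⟨⟨h1, ha⟩, h2⟩
  · rintro ⟨⟨h1, -⟩, h2⟩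
    refine ⟨⟨h1, h2⟩, fun hg => ha ?_⟩
    simpa [hg] using Nat.gcd_dvd_left a b


set_option maxHeartbeats 1000000 in
lemma ramanujanSum_eq (d m : ℕ) (hd : 0 < d) :
    ramanujanSum d m
      = ∑ e ∈ (Nat.gcd d m).divisors, ((ArithmeticFunction.moebius (d / e) : ℤ) : ℂ) * e := by
  have hd' : d ≠ 0 := hd.ne'
  set E : ℕ → ℂ := fun b => Complex.exp (2 * Real.pi * Complex.I * b * m / d) with hE
  have step1 : ramanujanSum d m
      = ∑ b ∈ Finset.range d, ∑ t ∈ d.divisors.filter (· ∣ b), ((ArithmeticFunction.moebius t : ℤ) : ℂ) * E b := by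
    rw [ramanujanSum, Finset.sum_filter]
    refine Finset.sum_congr rfl fun b _ => ?_
    rw [← divisors_gcd' d b hd', Nat.gcd_comm d b, ← Finset.sum_mul]
    have : (∑ t ∈ (Nat.gcd b d).divisors, ((ArithmeticFunction.moebius t : ℤ) : ℂ))
        = if Nat.gcd b d = 1 then 1 else 0 := by
      rw [← Int.cast_sum, sum_moeb]
      split <;> simp
    rw [this]
    split <;> simp [hE]
  have step2 : ramanujanSum d m
      = ∑ t ∈ d.divisors, ((ArithmeticFunction.moebius t : ℤ) : ℂ)
          * ∑ b ∈ (Finset.range d).filter (t ∣ ·), E b := by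
    rw [step1]
    rw [Finset.sum_comm' (s := Finset.range d) (t' := d.divisors)
      (s' := fun t => (Finset.range d).filter (t ∣ ·)) (t := fun b => d.divisors.filter (· ∣ b))
      (by intro t b; simp only [Finset.mem_filter, Finset.mem_range]; tauto)]
    exact Finset.sum_congr rfl fun t _ => by rw [Finset.mul_sum]
  have inner : ∀ t ∈ d.divisors,
      ∑ b ∈ (Finset.range d).filter (t ∣ ·), E b = if (d / t) ∣ m then ((d / t : ℕ) : ℂ) else 0 := by
    intro t ht
    rw [Nat.mem_divisors] at ht
    obtain ⟨htd, -⟩ := ht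
    have ht0 : 0 < t := Nat.pos_of_dvd_of_pos htd hd
    have hq0 : 0 < d / t := Nat.div_pos (Nat.le_of_dvd hd htd) ht0
    have hreindex : ∑ b ∈ (Finset.range d).filter (t ∣ ·), E b
        = ∑ c ∈ Finset.range (d / t), E (t * c) := by
      refine Finset.sum_nbij' (fun b => b / t) (fun c => t * c) ?_ ?_ ?_ ?_ ?_
      · intro b hb
        simp only [Finset.mem_filter, Finset.mem_range] at hb
        exact Finset.mem_range.mpr (Nat.div_lt_div_of_lt_of_dvd htd hb.1)
      · intro c hc
        simp only [Finset.mem_range] at hc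
        refine Finset.mem_filter.mpr ⟨Finset.mem_range.mpr ?_, dvd_mul_right t c⟩
        calc t * c < t * (d / t) := (Nat.mul_lt_mul_left ht0).mpr hc
        _ = d := Nat.mul_div_cancel' htd
      · intro b hb
        simp only [Finset.mem_filter] at hb
        exact Nat.mul_div_cancel' hb.2
      · intro c _
        exact Nat.mul_div_cancel_left c ht0
      · intro b hb
        simp only [Finset.mem_filter] at hb
        rw [Nat.mul_div_cancel' hb.2]
    rw [hreindex]
    have hEtc : ∀ c : ℕ, E (t * c)
        = Complex.exp (2 * Real.pi * Complex.I * c * m / ((d / t : ℕ) : ℂ)) := by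
      intro c
      show Complex.exp (2 * Real.pi * Complex.I * (t * c : ℕ) * m / d) = _
      congr 1
      have hdt : (d : ℂ) = (t : ℂ) * ((d / t : ℕ) : ℂ) := by
        exact_mod_cast congrArg (Nat.cast : ℕ → ℂ) (Nat.mul_div_cancel' htd).symm
      have ht0' : (t : ℂ) ≠ 0 := Nat.cast_ne_zero.mpr ht0.ne'
      have hq0' : ((d / t : ℕ) : ℂ) ≠ 0 := Nat.cast_ne_zero.mpr hq0.ne'
      rw [hdt]
      push_cast
      field_simp
    simp_rw [hEtc]
    exact sum_exp_full (d / t) m hq0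
  rw [step2, Finset.sum_congr rfl (fun t ht => by rw [inner t ht])]
  have hsub : ∀ t ∈ d.divisors,
      ((ArithmeticFunction.moebius t : ℤ) : ℂ) * (if (d / t) ∣ m then ((d / t : ℕ) : ℂ) else 0)
      = (fun e => ((ArithmeticFunction.moebius (d / e) : ℤ) : ℂ) * (if e ∣ m then (e : ℂ) else 0)) (d / t) := by
    intro t ht
    rw [Nat.mem_divisors] at ht
    simp only [Nat.div_div_self ht.1 hd']
  rw [Finset.sum_congr rfl hsub,
    Nat.sum_div_divisors (f := fun e => ((ArithmeticFunction.moebius (d / e) : ℤ) : ℂ)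
      * (if e ∣ m then (e : ℂ) else 0)) d,
    divisors_gcd' d m hd', Finset.sum_filter]
  exact Finset.sum_congr rfl fun e he => by split <;> simp

lemma summable_logpow (j : ℕ) :
    Summable (fun k : ℕ => (Real.log ((k : ℝ) + 1)) ^ j / ((k : ℝ) + 1) ^ 2) := by
  set ε : ℝ := 1 / (2 * (j + 1)) with hεdef
  have hε : 0 < ε := by positivity
  have hmaj : Summable (fun k : ℕ => ε⁻¹ ^ j * ((k : ℝ) + 1) ^ (-(3/2) : ℝ)) := by
    apply Summable.mul_left
    have h := (Real.summable_nat_rpow (p := (-(3/2) : ℝ))).mpr (by norm_num)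
    have h2 := (summable_nat_add_iff 1).mpr h
    refine h2.congr fun k => ?_
    push_cast
    ring_nf
  refine Summable.of_nonneg_of_le (fun k => div_nonneg (pow_nonneg (Real.log_nonneg
    (by {have := Nat.cast_nonneg (α := ℝ) k; linarith})) j) (by positivity)) (fun k => ?_) hmaj
  have hx1 : (1 : ℝ) ≤ (k : ℝ) + 1 := by
    have := Nat.cast_nonneg (α := ℝ) k
    linarith
  have hx0 : (0 : ℝ) < (k : ℝ) + 1 := by linarith
  have hlog : Real.log ((k : ℝ) + 1) ≤ ε⁻¹ * ((k : ℝ) + 1) ^ ε := by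
    have := Real.log_le_rpow_div (le_of_lt hx0) hε
    rw [div_eq_inv_mul] at this
    linarith [this]
  have hlog0 : 0 ≤ Real.log ((k : ℝ) + 1) := Real.log_nonneg hx1
  have hpow : (Real.log ((k : ℝ) + 1)) ^ j ≤ (ε⁻¹ * ((k : ℝ) + 1) ^ ε) ^ j :=
    pow_le_pow_left₀ hlog0 hlog j
  have hrw : (ε⁻¹ * ((k : ℝ) + 1) ^ ε) ^ j = ε⁻¹ ^ j * ((k : ℝ) + 1) ^ (ε * j) := by
    rw [mul_pow, ← Real.rpow_natCast (((k : ℝ) + 1) ^ ε) j, ← Real.rpow_mul (le_of_lt hx0)]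
  have hexp : ((k : ℝ) + 1) ^ (ε * j) ≤ ((k : ℝ) + 1) ^ ((1:ℝ)/2) := by
    apply Real.rpow_le_rpow_of_exponent_le hx1
    rw [hεdef]
    rw [div_mul_eq_mul_div, one_mul, div_le_div_iff₀ (by positivity) (by norm_num)]
    push_cast
    nlinarith [Nat.cast_nonneg (α := ℝ) j]
  calc (Real.log ((k : ℝ) + 1)) ^ j / ((k : ℝ) + 1) ^ 2
      ≤ (ε⁻¹ ^ j * ((k : ℝ) + 1) ^ ((1:ℝ)/2)) / ((k : ℝ) + 1) ^ 2 := by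
        apply div_le_div_of_nonneg_right ?_ (by positivity) |>.trans_eq rfl
        calc (Real.log ((k : ℝ) + 1)) ^ j ≤ ε⁻¹ ^ j * ((k : ℝ) + 1) ^ (ε * j) := by
              rw [← hrw]; exact hpow
          _ ≤ ε⁻¹ ^ j * ((k : ℝ) + 1) ^ ((1:ℝ)/2) := by
              apply mul_le_mul_of_nonneg_left hexp (by positivity)
    _ = ε⁻¹ ^ j * ((k : ℝ) + 1) ^ (-(3/2) : ℝ) := by
        rw [mul_div_assoc]
        congr 1
        rw [← Real.rpow_natCast ((k : ℝ) + 1) 2, ← Real.rpow_sub hx0]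
        norm_num

lemma summable_mterm (j : ℕ) :
    Summable (fun k : ℕ => ((ArithmeticFunction.moebius (k + 1) : ℤ) : ℝ)
      * (Real.log ((k : ℝ) + 1)) ^ j / ((k : ℝ) + 1) ^ 2) := by
  rw [← summable_abs_iff]
  refine Summable.of_nonneg_of_le (fun k => abs_nonneg _) (fun k => ?_) (summable_logpow j)
  rw [abs_div, abs_mul]
  have h1 : |((ArithmeticFunction.moebius (k + 1) : ℤ) : ℝ)| ≤ 1 := by
    have := ArithmeticFunction.abs_moebius_le_one (n := k + 1)
    exact_mod_cast (by exact_mod_cast this : |((ArithmeticFunction.moebius (k + 1) : ℤ) : ℝ)| ≤ 1)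
  have hlog0 : 0 ≤ Real.log ((k : ℝ) + 1) :=
    Real.log_nonneg (by {have := Nat.cast_nonneg (α := ℝ) k; linarith})
  have h2 : |(Real.log ((k : ℝ) + 1)) ^ j| = (Real.log ((k : ℝ) + 1)) ^ j :=
    abs_of_nonneg (pow_nonneg hlog0 j)
  have h3 : |((k : ℝ) + 1) ^ 2| = ((k : ℝ) + 1) ^ 2 := abs_of_nonneg (by positivity)
  rw [h2, h3]
  have hpos : (0 : ℝ) < ((k : ℝ) + 1) ^ 2 := by positivity
  apply div_le_div_of_nonneg_right ?_ hpos.le |>.trans_eq rfl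
  calc |((ArithmeticFunction.moebius (k + 1) : ℤ) : ℝ)| * (Real.log ((k : ℝ) + 1)) ^ j
      ≤ 1 * (Real.log ((k : ℝ) + 1)) ^ j := by
        exact mul_le_mul_of_nonneg_right h1 (pow_nonneg hlog0 j)
    _ = (Real.log ((k : ℝ) + 1)) ^ j := one_mul _

noncomputable def mconst (j : ℕ) : ℝ :=
  ∑' k : ℕ, ((ArithmeticFunction.moebius (k + 1) : ℤ) : ℝ)
    * (Real.log ((k : ℝ) + 1)) ^ j / ((k : ℝ) + 1) ^ 2

lemma hasSum_mconst (j : ℕ) :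
    HasSum (fun k : ℕ => ((ArithmeticFunction.moebius (k + 1) : ℤ) : ℝ)
      * (Real.log ((k : ℝ) + 1)) ^ j / ((k : ℝ) + 1) ^ 2) (mconst j) :=
  (summable_mterm j).hasSum

lemma mconst_zero : mconst 0 = 6 / Real.pi ^ 2 := by
  have hs : LSeriesSummable (fun n => (ArithmeticFunction.moebius n : ℂ)) 2 :=
    ArithmeticFunction.LSeriesSummable_moebius_iff.mpr (by norm_num)
  have hzeta : LSeries (fun n => ((ArithmeticFunction.zeta n : ℕ) : ℂ)) 2 *
      LSeries (fun n => (ArithmeticFunction.moebius n : ℂ)) 2 = 1 :=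
    ArithmeticFunction.LSeries_zeta_mul_Lseries_moebius (by norm_num)
  have hz2 : LSeries (fun n => ((ArithmeticFunction.zeta n : ℕ) : ℂ)) 2 = (Real.pi : ℂ) ^ 2 / 6 := by
    rw [ArithmeticFunction.LSeries_zeta_eq_riemannZeta (by norm_num), riemannZeta_two]
  have hpi : ((Real.pi : ℂ)) ^ 2 / 6 ≠ 0 := by
    simp [Real.pi_ne_zero, Complex.ofReal_ne_zero]
  have hL : LSeries (fun n => (ArithmeticFunction.moebius n : ℂ)) 2 = 6 / (Real.pi : ℂ) ^ 2 := by
    rw [hz2] at hzeta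
    have hπ2 : ((Real.pi : ℂ)) ^ 2 ≠ 0 := pow_ne_zero 2 (Complex.ofReal_ne_zero.mpr Real.pi_ne_zero)
    rw [eq_div_iff hπ2]
    linear_combination 6 * hzeta
  -- HasSum of terms
  have h1 : HasSum (fun n => LSeries.term (fun n => (ArithmeticFunction.moebius n : ℂ)) 2 n)
      (LSeries (fun n => (ArithmeticFunction.moebius n : ℂ)) 2) := hs.hasSum
  have h2 : HasSum (fun k : ℕ => LSeries.term (fun n => (ArithmeticFunction.moebius n : ℂ)) 2 (k + 1))
      (LSeries (fun n => (ArithmeticFunction.moebius n : ℂ)) 2) := by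
    have := (hasSum_nat_add_iff' (f := fun n => LSeries.term
      (fun n => (ArithmeticFunction.moebius n : ℂ)) 2 n) 1).mpr h1
    simpa using this
  have hfun : (fun k : ℕ => LSeries.term (fun n => (ArithmeticFunction.moebius n : ℂ)) 2 (k + 1))
      = fun k : ℕ => ((ArithmeticFunction.moebius (k + 1) : ℤ) : ℂ) / ((k : ℂ) + 1) ^ 2 := by
    funext k
    rw [LSeries.term_of_ne_zero (Nat.succ_ne_zero k),
      show (2 : ℂ) = ((2 : ℕ) : ℂ) by norm_num, Complex.cpow_natCast]
    push_cast
    ring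
  rw [hfun, hL] at h2
  have h4 : HasSum (fun k : ℕ => ((ArithmeticFunction.moebius (k + 1) : ℤ) : ℂ) / ((k : ℂ) + 1) ^ 2)
      ((mconst 0 : ℝ) : ℂ) := by
    have := (Complex.hasSum_ofReal (f := fun k : ℕ => ((ArithmeticFunction.moebius (k + 1) : ℤ) : ℝ)
      * (Real.log ((k : ℝ) + 1)) ^ 0 / ((k : ℝ) + 1) ^ 2)).mpr (hasSum_mconst 0)
    refine HasSum.congr_fun this fun k => ?_
    simp only [pow_zero, mul_one]
    push_cast
    ring
  have := h4.unique h2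
  have hcast : ((mconst 0 : ℝ) : ℂ) = ((6 / Real.pi ^ 2 : ℝ) : ℂ) := by
    rw [this]; push_cast; ring
  exact_mod_cast hcast

lemma hasSum_A_real (A : ℝ) :
    HasSum (fun k : ℕ => ((ArithmeticFunction.moebius (k + 1) : ℤ) : ℝ) / ((k : ℝ) + 1) ^ 2
      * (A - 2 * Real.log ((k : ℝ) + 1)) ^ 2)
      (A ^ 2 * mconst 0 - 4 * A * mconst 1 + 4 * mconst 2) := by
  have h := (((hasSum_mconst 0).mul_left (A ^ 2)).sub ((hasSum_mconst 1).mul_left (4 * A))).add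
    ((hasSum_mconst 2).mul_left 4)
  refine HasSum.congr_fun h fun k => ?_
  ring

lemma hasSum_A_complex (A : ℝ) :
    HasSum (fun k : ℕ => ((ArithmeticFunction.moebius (k + 1) : ℤ) : ℂ) / ((k : ℂ) + 1) ^ 2
      * (((A - 2 * Real.log ((k : ℝ) + 1) : ℝ)) : ℂ) ^ 2)
      (((A ^ 2 * mconst 0 - 4 * A * mconst 1 + 4 * mconst 2 : ℝ)) : ℂ) := by
  have h := (Complex.hasSum_ofReal (f := fun k : ℕ =>
    ((ArithmeticFunction.moebius (k + 1) : ℤ) : ℝ) / ((k : ℝ) + 1) ^ 2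
      * (A - 2 * Real.log ((k : ℝ) + 1)) ^ 2)).mpr (hasSum_A_real A)
  refine HasSum.congr_fun h fun k => ?_
  push_cast
  ring

lemma hasSum_ge (m : ℕ) (hm : m ≠ 0) (L : ℝ) (e : ℕ) (he : e ∈ m.divisors) :
    HasSum (fun d : ℕ =>
      (if e ∣ (d + 1) then ((ArithmeticFunction.moebius ((d + 1) / e) : ℤ) : ℂ) * e else 0)
        / ((d : ℂ) + 1) ^ 2 * (((L - 2 * Real.log ((d : ℝ) + 1) : ℝ)) : ℂ) ^ 2)
      ((((1 / (e : ℝ)) * ((L - 2 * Real.log e) ^ 2 * mconst 0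
        - 4 * (L - 2 * Real.log e) * mconst 1 + 4 * mconst 2) : ℝ)) : ℂ) := by
  rw [Nat.mem_divisors] at he
  obtain ⟨hed, -⟩ := he
  have he0 : e ≠ 0 := by rintro rfl; exact hm (Nat.eq_zero_of_zero_dvd hed)
  have he0' : 0 < e := Nat.pos_of_ne_zero he0
  have heR : (0 : ℝ) < e := by exact_mod_cast he0'
  set A : ℝ := L - 2 * Real.log e with hA
  have hval : ((((1 / (e : ℝ)) * (A ^ 2 * mconst 0 - 4 * A * mconst 1 + 4 * mconst 2) : ℝ)) : ℂ)
      = (((1 / (e : ℝ) : ℝ)) : ℂ) * (((A ^ 2 * mconst 0 - 4 * A * mconst 1 + 4 * mconst 2 : ℝ)) : ℂ) := by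
    push_cast; ring
  rw [hval]
  have base := (hasSum_A_complex A).mul_left ((((1 / (e : ℝ) : ℝ)) : ℂ))
  set ι : ℕ → ℕ := fun k => e * (k + 1) - 1 with hι
  have hι1 : ∀ k, ι k + 1 = e * (k + 1) := by
    intro k
    have : 1 ≤ e * (k + 1) := Nat.one_le_iff_ne_zero.mpr (by positivity)
    simp only [hι]
    omega
  have hinj : Function.Injective ι := by
    intro a b hab
    have h1 : e * (a + 1) = e * (b + 1) := by
      rw [← hι1 a, ← hι1 b, hab]
    have := Nat.eq_of_mul_eq_mul_left he0' h1
    omega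
  have hcomp : ∀ k : ℕ, ((fun d : ℕ =>
      (if e ∣ (d + 1) then ((ArithmeticFunction.moebius ((d + 1) / e) : ℤ) : ℂ) * e else 0)
        / ((d : ℂ) + 1) ^ 2 * (((L - 2 * Real.log ((d : ℝ) + 1) : ℝ)) : ℂ) ^ 2) ∘ ι) k
      = (((1 / (e : ℝ) : ℝ)) : ℂ) * (((ArithmeticFunction.moebius (k + 1) : ℤ) : ℂ) / ((k : ℂ) + 1) ^ 2
        * (((A - 2 * Real.log ((k : ℝ) + 1) : ℝ)) : ℂ) ^ 2) := by
    intro k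
    have h1 : ι k + 1 = e * (k + 1) := hι1 k
    have hdvd : e ∣ (ι k + 1) := ⟨k + 1, h1⟩
    have hdiv : (ι k + 1) / e = k + 1 := by rw [h1, Nat.mul_div_cancel_left _ he0']
    have hcastC : ((ι k : ℂ) + 1) = (e : ℂ) * ((k : ℂ) + 1) := by
      have := congrArg (Nat.cast : ℕ → ℂ) h1
      push_cast at this
      linear_combination this
    have hcastR : ((ι k : ℝ) + 1) = (e : ℝ) * ((k : ℝ) + 1) := by
      have := congrArg (Nat.cast : ℕ → ℝ) h1
      push_cast at this
      linarith
    have hlog : Real.log ((ι k : ℝ) + 1) = Real.log e + Real.log ((k : ℝ) + 1) := by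
      rw [hcastR, Real.log_mul (ne_of_gt heR) (by positivity)]
    simp only [Function.comp_apply, if_pos hdvd, hdiv, hcastC, hlog]
    have hsq : ((L - 2 * (Real.log e + Real.log ((k : ℝ) + 1)) : ℝ) : ℂ)
        = (((A - 2 * Real.log ((k : ℝ) + 1) : ℝ)) : ℂ) := by
      rw [hA]; push_cast; ring
    rw [hsq]
    have heC : ((e : ℂ)) ≠ 0 := Nat.cast_ne_zero.mpr he0
    have hkC : ((k : ℂ) + 1) ≠ 0 := by
      intro h
      have : ((k : ℝ) + 1) = 0 := by exact_mod_cast congrArg Complex.re h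
      nlinarith [Nat.cast_nonneg (α := ℝ) k]
    field_simp
    simp [heC]
    rw [eq_comm, mul_inv_eq_iff_eq_mul₀ heC]
    ring
  have hvanish : ∀ d : ℕ, d ∉ Set.range ι →
      (if e ∣ (d + 1) then ((ArithmeticFunction.moebius ((d + 1) / e) : ℤ) : ℂ) * e else 0)
        / ((d : ℂ) + 1) ^ 2 * (((L - 2 * Real.log ((d : ℝ) + 1) : ℝ)) : ℂ) ^ 2 = 0 := by
    intro d hd
    have hnd : ¬ e ∣ (d + 1) := by
      rintro ⟨q, hq⟩
      apply hd
      have hq0 : q ≠ 0 := by rintro rfl; simp at hq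
      refine ⟨q - 1, ?_⟩
      have h2 : e * ((q - 1) + 1) = e * q := by
        rw [Nat.sub_add_cancel (Nat.one_le_iff_ne_zero.mpr hq0)]
      simp only [hι, h2, ← hq]
      omega
    rw [if_neg hnd]
    simp
  exact (hinj.hasSum_iff hvanish).mp (HasSum.congr_fun base fun k => hcomp k)

noncomputable def cconst : ℕ → ℕ → ℝ
  | 0, 0 => 4 * Real.eulerMascheroniConstant ^ 2 * mconst 0
      - 8 * Real.eulerMascheroniConstant * mconst 1 + 4 * mconst 2
  | 0, 1 => -8 * Real.eulerMascheroniConstant * mconst 0 + 8 * mconst 1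
  | 0, 2 => 4 * mconst 0
  | 1, 0 => 4 * Real.eulerMascheroniConstant * mconst 0 - 4 * mconst 1
  | 1, 1 => -4 * mconst 0
  | 2, 0 => mconst 0
  | _, _ => 0

lemma T_eq (m : ℕ) (ℓ : ℝ) :
    ∑ p ∈ (Finset.range 3 ×ˢ Finset.range 3).filter (fun p => p.1 + p.2 ≤ 2),
        cconst p.1 p.2 * ℓ ^ p.1 * ∑ e ∈ m.divisors, (Real.log e) ^ p.2 / e
      = ∑ e ∈ m.divisors, (1 / (e : ℝ)) *
        ((ℓ + 2 * Real.eulerMascheroniConstant - 2 * Real.log e) ^ 2 * mconst 0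
          - 4 * (ℓ + 2 * Real.eulerMascheroniConstant - 2 * Real.log e) * mconst 1
          + 4 * mconst 2) := by
  have hstep : ∀ p ∈ (Finset.range 3 ×ˢ Finset.range 3).filter (fun p => p.1 + p.2 ≤ 2),
      cconst p.1 p.2 * ℓ ^ p.1 * ∑ e ∈ m.divisors, (Real.log e) ^ p.2 / e
        = ∑ e ∈ m.divisors, cconst p.1 p.2 * ℓ ^ p.1 * ((Real.log e) ^ p.2 / e) :=
    fun p _ => Finset.mul_sum _ _ _
  rw [Finset.sum_congr rfl hstep, Finset.sum_comm]
  refine Finset.sum_congr rfl fun e he => ?_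
  have he0 : (e : ℝ) ≠ 0 := by
    rw [Nat.mem_divisors] at he
    have : e ≠ 0 := by
      rintro rfl
      exact he.2 (Nat.eq_zero_of_zero_dvd he.1)
    exact_mod_cast this
  rw [Finset.sum_filter, Finset.sum_product]
  simp only [Finset.sum_range_succ, Finset.sum_range_zero]
  norm_num [cconst]
  field_simp
  ring

lemma norm_ramanujanSum_le (d m : ℕ) (hd : 0 < d) (hm : m ≠ 0) :
    ‖ramanujanSum d m‖ ≤ ∑ e ∈ m.divisors, (e : ℝ) := by
  rw [ramanujanSum_eq d m hd]
  refine (norm_sum_le _ _).trans ?_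
  have h1 : ∀ e ∈ (Nat.gcd d m).divisors,
      ‖((ArithmeticFunction.moebius (d / e) : ℤ) : ℂ) * e‖ ≤ (e : ℝ) := by
    intro e _
    rw [norm_mul]
    have hμ : ‖((ArithmeticFunction.moebius (d / e) : ℤ) : ℂ)‖ ≤ 1 := by
      have h := ArithmeticFunction.abs_moebius_le_one (n := d / e)
      rw [show ((ArithmeticFunction.moebius (d / e) : ℤ) : ℂ)
        = ((ArithmeticFunction.moebius (d / e) : ℤ) : ℝ) by push_cast; ring, Complex.norm_real,
        Real.norm_eq_abs]
      exact_mod_cast h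
    calc ‖((ArithmeticFunction.moebius (d / e) : ℤ) : ℂ)‖ * ‖(e : ℂ)‖
        ≤ 1 * ‖(e : ℂ)‖ := mul_le_mul_of_nonneg_right hμ (norm_nonneg _)
      _ = (e : ℝ) := by simp
  refine (Finset.sum_le_sum h1).trans ?_
  exact Finset.sum_le_sum_of_subset_of_nonneg
    (Nat.divisors_subset_of_dvd hm (Nat.gcd_dvd_right d m))
    (fun e _ _ => Nat.cast_nonneg e)

lemma summable_major (L : ℝ) :
    Summable (fun d : ℕ => (L - 2 * Real.log ((d : ℝ) + 1)) ^ 2 / ((d : ℝ) + 1) ^ 2) := by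
  have h := (((summable_logpow 0).mul_left (L ^ 2)).sub
    ((summable_logpow 1).mul_left (4 * L))).add ((summable_logpow 2).mul_left 4)
  refine h.congr fun d => ?_
  ring


/-- There exist constants `c_{i,j}` (with `c_{2,0} = 1/ζ(2) = 6/π²`) such that for every `n ≥ 1`
the series `∑_{d ≥ 1} r_d(2n)/d² (log n + 2γ − 2 log d)²` converges absolutely and equals
`∑_{i+j ≤ 2} c_{i,j} (log n)^i σ_{-1}^{(j)}(2n)`. -/
theorem stmt2 :
    ∃ c : ℕ → ℕ → ℝ, c 2 0 = 6 / Real.pi ^ 2 ∧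
      ∀ n : ℕ, 0 < n →
        Summable (fun d : ℕ => ‖ramanujanSum (d + 1) (2 * n) / ((d + 1 : ℂ)) ^ 2 *
          (((Real.log n + 2 * Real.eulerMascheroniConstant - 2 * Real.log (d + 1) : ℝ) : ℂ)) ^ 2‖) ∧
        HasSum (fun d : ℕ => ramanujanSum (d + 1) (2 * n) / ((d + 1 : ℂ)) ^ 2 *
          (((Real.log n + 2 * Real.eulerMascheroniConstant - 2 * Real.log (d + 1) : ℝ) : ℂ)) ^ 2)
          (((∑ p ∈ (Finset.range 3 ×ˢ Finset.range 3).filter (fun p => p.1 + p.2 ≤ 2),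
            c p.1 p.2 * (Real.log n) ^ p.1 *
              ∑ e ∈ (2 * n).divisors, (Real.log e) ^ p.2 / e : ℝ)) : ℂ) := by
  refine ⟨cconst, by rw [show cconst 2 0 = mconst 0 from rfl, mconst_zero], fun n hn => ?_⟩
  set m := 2 * n with hmdef
  have hm0 : m ≠ 0 := by omega
  set L : ℝ := Real.log n + 2 * Real.eulerMascheroniConstant with hLdef
  -- Summability of norms
  set Cσ : ℝ := ∑ e ∈ m.divisors, (e : ℝ) with hCσ
  have hCσ0 : 0 ≤ Cσ := Finset.sum_nonneg fun e _ => Nat.cast_nonneg e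
  have hbound : ∀ d : ℕ, ‖ramanujanSum (d + 1) m / ((d : ℂ) + 1) ^ 2 *
      (((L - 2 * Real.log ((d : ℝ) + 1) : ℝ)) : ℂ) ^ 2‖
      ≤ Cσ * ((L - 2 * Real.log ((d : ℝ) + 1)) ^ 2 / ((d : ℝ) + 1) ^ 2) := by
    intro d
    have hden : ((d : ℂ) + 1) = (((d : ℝ) + 1 : ℝ) : ℂ) := by push_cast; ring
    rw [norm_mul, norm_div, norm_pow, norm_pow, hden, Complex.norm_real, Complex.norm_real,
      Real.norm_eq_abs, Real.norm_eq_abs, _root_.sq_abs, _root_.sq_abs]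
    have hx2 : (0 : ℝ) ≤ (L - 2 * Real.log ((d : ℝ) + 1)) ^ 2 := sq_nonneg _
    have hd2 : (0 : ℝ) < ((d : ℝ) + 1) ^ 2 := by positivity
    calc ‖ramanujanSum (d + 1) m‖ / ((d : ℝ) + 1) ^ 2 * (L - 2 * Real.log ((d : ℝ) + 1)) ^ 2
        = ‖ramanujanSum (d + 1) m‖ * ((L - 2 * Real.log ((d : ℝ) + 1)) ^ 2 / ((d : ℝ) + 1) ^ 2) := by
          ring
      _ ≤ Cσ * ((L - 2 * Real.log ((d : ℝ) + 1)) ^ 2 / ((d : ℝ) + 1) ^ 2) := by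
          apply mul_le_mul_of_nonneg_right (norm_ramanujanSum_le (d + 1) m (Nat.succ_pos d) hm0)
          positivity
  have hsummable : Summable (fun d : ℕ => ‖ramanujanSum (d + 1) m / ((d : ℂ) + 1) ^ 2 *
      (((L - 2 * Real.log ((d : ℝ) + 1) : ℝ)) : ℂ) ^ 2‖) := by
    refine Summable.of_nonneg_of_le (fun d => norm_nonneg _) hbound
      (((summable_major L).mul_left Cσ))
  -- pointwise decomposition
  have hpoint : ∀ d : ℕ, ramanujanSum (d + 1) m / ((d : ℂ) + 1) ^ 2 *
      (((L - 2 * Real.log ((d : ℝ) + 1) : ℝ)) : ℂ) ^ 2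
      = ∑ e ∈ m.divisors, ((if e ∣ (d + 1) then ((ArithmeticFunction.moebius ((d + 1) / e) : ℤ) : ℂ) * e else 0)
          / ((d : ℂ) + 1) ^ 2 * (((L - 2 * Real.log ((d : ℝ) + 1) : ℝ)) : ℂ) ^ 2) := by
    intro d
    rw [ramanujanSum_eq (d + 1) m (Nat.succ_pos d), Nat.gcd_comm, divisors_gcd' m (d + 1) hm0,
      Finset.sum_filter, Finset.sum_div, Finset.sum_mul]
  have hsum2 : HasSum (fun d : ℕ => ∑ e ∈ m.divisors,
      ((if e ∣ (d + 1) then ((ArithmeticFunction.moebius ((d + 1) / e) : ℤ) : ℂ) * e else 0)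
          / ((d : ℂ) + 1) ^ 2 * (((L - 2 * Real.log ((d : ℝ) + 1) : ℝ)) : ℂ) ^ 2))
      (∑ e ∈ m.divisors, ((((1 / (e : ℝ)) * ((L - 2 * Real.log e) ^ 2 * mconst 0
        - 4 * (L - 2 * Real.log e) * mconst 1 + 4 * mconst 2) : ℝ)) : ℂ)) :=
    hasSum_sum fun e he => hasSum_ge m hm0 L e he
  have Hfinal := HasSum.congr_fun hsum2 hpoint
  have hv : (∑ e ∈ m.divisors, ((((1 / (e : ℝ)) * ((L - 2 * Real.log e) ^ 2 * mconst 0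
        - 4 * (L - 2 * Real.log e) * mconst 1 + 4 * mconst 2) : ℝ)) : ℂ))
      = (((∑ p ∈ (Finset.range 3 ×ˢ Finset.range 3).filter (fun p => p.1 + p.2 ≤ 2),
            cconst p.1 p.2 * (Real.log n) ^ p.1 *
              ∑ e ∈ m.divisors, (Real.log e) ^ p.2 / e : ℝ)) : ℂ) := by
    rw [hLdef, T_eq m (Real.log n)]
    push_cast
    rfl
  exact ⟨hsummable, hv ▸ Hfinal⟩
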